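/- arXiv:2006.06878 — 5 statements merged into one kernel-verified Lean document; each statement's English description precedes it below -/
import Mathlib

section
/- Let x_i, x_j, v, v' ∈ R^d with v, v' ≠ 0 and ||x_i||₂ ≤ 1, ||x_j||₂ ≤ 1. Then |⟨x_i^{v'⊥}, x_j^{v'⊥}⟩ - ⟨x_i^{v⊥}, x_j^{v⊥}⟩| ≤ 2||v'/||v'||₂ - v/||v||₂||₂. -/
local notation "⟪" x ", " y "⟫" => @inner ℝ _ _ x y

/-- The projection of `x` onto the line spanned by `v`. -/
noncomputable def projLine {d : ℕ} (v x : EuclideanSpace ℝ (Fin d)) :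
    EuclideanSpace ℝ (Fin d) :=
  (⟪v, x⟫ / ‖v‖ ^ 2) • v

lemma projLine_eq_unit {d : ℕ} (v x : EuclideanSpace ℝ (Fin d)) (hv : v ≠ 0) :
    projLine v x = ⟪(‖v‖⁻¹ • v : EuclideanSpace ℝ (Fin d)), x⟫ • (‖v‖⁻¹ • v) := by
  unfold projLine
  rw [real_inner_smul_left, smul_smul]
  congr 1
  field_simp

lemma inner_sub_proj {d : ℕ} (u x y : EuclideanSpace ℝ (Fin d)) (hu : ‖u‖ = 1) :
    ⟪x - ⟪u, x⟫ • u, y - ⟪u, y⟫ • u⟫ = ⟪x, y⟫ - ⟪u, x⟫ * ⟪u, y⟫ := by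
  have huu : ⟪u, u⟫ = (1 : ℝ) := by
    rw [real_inner_self_eq_norm_sq, hu]; norm_num
  rw [inner_sub_left, inner_sub_right, inner_sub_right, real_inner_smul_left,
    real_inner_smul_right, real_inner_smul_left, real_inner_smul_right, huu,
    real_inner_comm y x, real_inner_comm x u]
  ring

/-- Lipschitz estimate for the inner product of orthogonal components:
`|⟨x_i^{v'⊥}, x_j^{v'⊥}⟩ - ⟨x_i^{v⊥}, x_j^{v⊥}⟩| ≤ 2‖v'/‖v'‖ - v/‖v‖‖`. -/
theorem inner_projOrth_lipschitz {d : ℕ}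
    (xi xj v v' : EuclideanSpace ℝ (Fin d)) (hv : v ≠ 0) (hv' : v' ≠ 0)
    (hxi : ‖xi‖ ≤ 1) (hxj : ‖xj‖ ≤ 1) :
    |⟪xi - projLine v' xi, xj - projLine v' xj⟫ - ⟪xi - projLine v xi, xj - projLine v xj⟫|
      ≤ 2 * ‖(‖v'‖⁻¹ • v') - (‖v‖⁻¹ • v)‖ := by
  set u : EuclideanSpace ℝ (Fin d) := ‖v‖⁻¹ • v with hu_def
  set u' : EuclideanSpace ℝ (Fin d) := ‖v'‖⁻¹ • v' with hu'_def
  have hu : ‖u‖ = 1 := norm_smul_inv_norm hv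
  have hu' : ‖u'‖ = 1 := norm_smul_inv_norm hv'
  rw [projLine_eq_unit v' xi hv', projLine_eq_unit v' xj hv',
    projLine_eq_unit v xi hv, projLine_eq_unit v xj hv,
    inner_sub_proj u' xi xj hu', inner_sub_proj u xi xj hu]
  have key : ⟪xi, xj⟫ - ⟪u', xi⟫ * ⟪u', xj⟫ - (⟪xi, xj⟫ - ⟪u, xi⟫ * ⟪u, xj⟫)
      = ⟪u, xi⟫ * ⟪u - u', xj⟫ + ⟪u - u', xi⟫ * ⟪u', xj⟫ := by
    rw [inner_sub_left, inner_sub_left]; ring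
  rw [key]
  have h1 : |⟪u, xi⟫| ≤ 1 := by
    calc |⟪u, xi⟫| ≤ ‖u‖ * ‖xi‖ := abs_real_inner_le_norm u xi
    _ ≤ 1 := by rw [hu]; simpa using hxi
  have h2 : |⟪u', xj⟫| ≤ 1 := by
    calc |⟪u', xj⟫| ≤ ‖u'‖ * ‖xj‖ := abs_real_inner_le_norm u' xj
    _ ≤ 1 := by rw [hu']; simpa using hxj
  have h3 : |⟪u - u', xj⟫| ≤ ‖u' - u‖ := by
    calc |⟪u - u', xj⟫| ≤ ‖u - u'‖ * ‖xj‖ := abs_real_inner_le_norm _ _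
    _ ≤ ‖u - u'‖ * 1 := by
        exact mul_le_mul_of_nonneg_left hxj (norm_nonneg _)
    _ = ‖u' - u‖ := by rw [mul_one, norm_sub_rev]
  have h4 : |⟪u - u', xi⟫| ≤ ‖u' - u‖ := by
    calc |⟪u - u', xi⟫| ≤ ‖u - u'‖ * ‖xi‖ := abs_real_inner_le_norm _ _
    _ ≤ ‖u - u'‖ * 1 := by
        exact mul_le_mul_of_nonneg_left hxi (norm_nonneg _)
    _ = ‖u' - u‖ := by rw [mul_one, norm_sub_rev]
  calc |⟪u, xi⟫ * ⟪u - u', xj⟫ + ⟪u - u', xi⟫ * ⟪u', xj⟫|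
      ≤ |⟪u, xi⟫ * ⟪u - u', xj⟫| + |⟪u - u', xi⟫ * ⟪u', xj⟫| := abs_add_le _ _
    _ = |⟪u, xi⟫| * |⟪u - u', xj⟫| + |⟪u - u', xi⟫| * |⟪u', xj⟫| := by
        rw [abs_mul, abs_mul]
    _ ≤ 1 * ‖u' - u‖ + ‖u' - u‖ * 1 := by
        gcongr
    _ = 2 * ‖u' - u‖ := by ring
end

section
/- Let f : [0,T] → R^n be differentiable and y ∈ R^n, and suppose (d/dt)f(t) = −Λ(t)(f(t) − y) where Λ(t) is a symmetric positive semidefinite matrix with λ_min(Λ(t)) ≥ ω/2 for all t ∈ [0,T] and some ω > 0. Then ||f(t) − y||₂² ≤ exp(−ωt)·||f(0) − y||₂² for all t ∈ [0,T]. -/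
open Set
local notation "⟪" x ", " y "⟫" => @inner ℝ _ _ x y

/-- Linear convergence of gradient flow under a uniformly positive definite NTK:
if `f'(t) = -Λ(t)(f(t) - y)` with `Λ(t)` symmetric PSD and `λ_min(Λ(t)) ≥ ω/2`, then
`‖f(t) - y‖² ≤ exp(-ωt)‖f(0) - y‖²` on `[0, T]`. -/
theorem gradient_flow_linear_convergence {n : ℕ} (T ω : ℝ) (hT : 0 ≤ T) (hω : 0 < ω)
    (f : ℝ → EuclideanSpace ℝ (Fin n)) (y : EuclideanSpace ℝ (Fin n))
    (Λ : ℝ → EuclideanSpace ℝ (Fin n) →L[ℝ] EuclideanSpace ℝ (Fin n))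
    (hsymm : ∀ t ∈ Icc (0 : ℝ) T, ∀ x z, ⟪Λ t x, z⟫ = ⟪x, Λ t z⟫)
    (hpsd : ∀ t ∈ Icc (0 : ℝ) T, ∀ x, (ω / 2) * ‖x‖ ^ 2 ≤ ⟪x, Λ t x⟫)
    (hderiv : ∀ t ∈ Icc (0 : ℝ) T, HasDerivAt f (-(Λ t (f t - y))) t) :
    ∀ t ∈ Icc (0 : ℝ) T, ‖f t - y‖ ^ 2 ≤ Real.exp (-ω * t) * ‖f 0 - y‖ ^ 2 := by
  set v : ℝ → EuclideanSpace ℝ (Fin n) := fun t => f t - y with hv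
  have hvderiv : ∀ t ∈ Icc (0 : ℝ) T, HasDerivAt v (-(Λ t (v t))) t := by
    intro t ht
    exact (hderiv t ht).sub_const y
  -- g t = ⟪v t, v t⟫ = ‖v t‖²
  have hg : ∀ t ∈ Icc (0 : ℝ) T,
      HasDerivAt (fun t => ‖v t‖ ^ 2) (-(2 * ⟪v t, Λ t (v t)⟫)) t := by
    intro t ht
    have h1 : HasDerivAt (fun t => ⟪v t, v t⟫)
        (⟪v t, -(Λ t (v t))⟫ + ⟪-(Λ t (v t)), v t⟫) t :=
      (hvderiv t ht).inner ℝ (hvderiv t ht)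
    have heq : (fun t => ⟪v t, v t⟫) = fun t => ‖v t‖ ^ 2 := by
      funext s
      rw [real_inner_self_eq_norm_sq]
    rw [heq] at h1
    convert h1 using 1
    rw [inner_neg_left, inner_neg_right, real_inner_comm ((Λ t) (v t)) (v t)]
    ring
  -- h t = exp(ω t) * ‖v t‖²
  set h : ℝ → ℝ := fun t => Real.exp (ω * t) * ‖v t‖ ^ 2 with hh
  have hhderiv : ∀ t ∈ Icc (0 : ℝ) T, HasDerivAt h
      (ω * Real.exp (ω * t) * ‖v t‖ ^ 2 + Real.exp (ω * t) * (-(2 * ⟪v t, Λ t (v t)⟫))) t := by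
    intro t ht
    have he : HasDerivAt (fun t => Real.exp (ω * t)) (ω * Real.exp (ω * t)) t := by
      have := (Real.hasDerivAt_exp (ω * t)).comp t ((hasDerivAt_id t).const_mul ω)
      simpa [mul_comm, Function.comp_def] using this
    exact he.mul (hg t ht)
  have hanti : AntitoneOn h (Icc 0 T) := by
    apply antitoneOn_of_deriv_nonpos (convex_Icc 0 T)
    · exact fun t ht => (hhderiv t ht).continuousAt.continuousWithinAt
    · intro t ht
      rw [interior_Icc] at ht
      exact ((hhderiv t (Ioo_subset_Icc_self ht)).differentiableAt).differentiableWithinAt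
    · intro t ht
      rw [interior_Icc] at ht
      have ht' := Ioo_subset_Icc_self ht
      rw [(hhderiv t ht').deriv]
      have hb := hpsd t ht' (v t)
      have hexp := (Real.exp_pos (ω * t)).le
      nlinarith [Real.exp_pos (ω * t)]
  intro t ht
  have := hanti (left_mem_Icc.mpr hT) ht ht.1
  have h0 : h 0 = ‖v 0‖ ^ 2 := by simp [hh]
  rw [h0] at this
  have hexp : (0:ℝ) < Real.exp (ω * t) := Real.exp_pos _
  have : Real.exp (ω * t) * ‖v t‖ ^ 2 ≤ ‖v 0‖ ^ 2 := this
  have key : ‖v t‖ ^ 2 ≤ Real.exp (-ω * t) * ‖v 0‖ ^ 2 := by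
    rw [neg_mul, Real.exp_neg]
    rw [← le_div_iff₀' hexp] at this
    simpa [div_eq_inv_mul] using this
  simpa [hv] using key
end

section
/- Let x₁, ..., x_n ∈ R^d with d ≥ 2, all nonzero, and pairwise non-parallel (x_i ≠ β·x_j for all i ≠ j and all β ∈ R \ {0}). Define for each i the functional φ_i : R^d \ {0} → R^d by φ_i(v) = (I − vv^T/||v||₂²)x_i · 1{⟨v, x_i⟩ ≥ 0}. Then φ₁, ..., φ_n are linearly independent as elements of L²(N(0, α²I); R^d), i.e., if ∑ c_i φ_i = 0 Lebesgue-almost everywhere then c₁ = ... = c_n = 0. -/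
open MeasureTheory Filter Topology
local notation "⟪" x ", " y "⟫" => @inner ℝ _ _ x y

lemma exists_good_v {d n : ℕ} (hd : 2 ≤ d)
    (x : Fin n → EuclideanSpace ℝ (Fin d))
    (hx : ∀ i, x i ≠ 0)
    (hpar : ∀ i j, i ≠ j → ∀ β : ℝ, β ≠ 0 → x i ≠ β • x j)
    (i : Fin n) :
    ∃ v₀ : EuclideanSpace ℝ (Fin d), v₀ ≠ 0 ∧ ⟪x i, v₀⟫ = 0 ∧
      ∀ j, j ≠ i → ⟪x j, v₀⟫ ≠ 0 := by
  set W : Submodule ℝ (EuclideanSpace ℝ (Fin d)) :=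
    LinearMap.ker (innerSL ℝ (x i)).toLinearMap with hW
  have hrange : Module.finrank ℝ (LinearMap.range (innerSL ℝ (x i)).toLinearMap) ≤ 1 := by
    simpa using Submodule.finrank_le (LinearMap.range (innerSL ℝ (x i)).toLinearMap)
  have hsum := LinearMap.finrank_range_add_finrank_ker (innerSL ℝ (x i)).toLinearMap
  have hE : Module.finrank ℝ (EuclideanSpace ℝ (Fin d)) = d := by simp
  rw [hE] at hsum
  have hWpos : 0 < Module.finrank ℝ W := by rw [hW]; omega
  have : Nontrivial W := Module.nontrivial_of_finrank_pos hWpos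
  set q : Fin n → Subspace ℝ W := fun j =>
    LinearMap.ker ((innerSL ℝ (x j)).toLinearMap.comp W.subtype) with hq
  set p : Option {j : Fin n // j ≠ i} → Subspace ℝ W := fun k =>
    k.elim ⊥ (fun j => q j.1) with hp
  have hptop : ∀ k, p k ≠ ⊤ := by
    rintro (_ | ⟨j, hj⟩) htop
    · exact bot_ne_top htop
    · have hmem : x j ∈ Wᗮ := by
        intro u hu
        have h2 : (⟨u, hu⟩ : W) ∈ q j := by
          have : q j = ⊤ := htop
          rw [this]; exact Submodule.mem_top
        simpa only [hq, LinearMap.mem_ker, LinearMap.comp_apply, Submodule.subtype_apply,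
          ContinuousLinearMap.coe_coe, innerSL_apply_apply, real_inner_comm] using h2
      have hWo : W = (ℝ ∙ x i)ᗮ := by
        ext v
        rw [Submodule.mem_orthogonal_singleton_iff_inner_left]
        simp only [hW, LinearMap.mem_ker, ContinuousLinearMap.coe_coe, innerSL_apply_apply]
        rw [real_inner_comm]
      rw [hWo, Submodule.orthogonal_orthogonal] at hmem
      obtain ⟨β, hβ⟩ := Submodule.mem_span_singleton.mp hmem
      have hβ0 : β ≠ 0 := by
        rintro rfl; exact hx j (by simpa using hβ.symm)
      exact hpar j i hj β hβ0 hβ.symm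
  have hcov : ⋃ k, ((p k : Subspace ℝ W) : Set W) ≠ Set.univ := by
    intro h
    obtain ⟨k, hk⟩ := Subspace.exists_eq_top_of_iUnion_eq_univ h
    exact hptop k hk
  obtain ⟨w, hw⟩ := Set.ne_univ_iff_exists_notMem _ |>.mp hcov
  simp only [Set.mem_iUnion, not_exists] at hw
  refine ⟨(w : EuclideanSpace ℝ (Fin d)), ?_, ?_, ?_⟩
  · have h0 := hw none
    simp only [hp, Option.elim, SetLike.mem_coe, Submodule.mem_bot] at h0
    simpa [Submodule.coe_eq_zero] using h0
  · have h1 := w.2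
    simpa only [hW, LinearMap.mem_ker, ContinuousLinearMap.coe_coe, innerSL_apply_apply] using h1
  · intro j hj
    have h2 := hw (some ⟨j, hj⟩)
    simpa only [hp, hq, Option.elim, SetLike.mem_coe, LinearMap.mem_ker, LinearMap.comp_apply,
      Submodule.subtype_apply, ContinuousLinearMap.coe_coe, innerSL_apply_apply] using h2

lemma contAt_smooth {d : ℕ} (w v : EuclideanSpace ℝ (Fin d)) (hv : v ≠ 0) :
    ContinuousAt (fun u : EuclideanSpace ℝ (Fin d) => w - (⟪u, w⟫ / ‖u‖ ^ 2) • u) v := by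
  have hinner : Continuous fun u : EuclideanSpace ℝ (Fin d) => ⟪u, w⟫ :=
    continuous_id.inner continuous_const
  have h1 : ContinuousAt (fun u : EuclideanSpace ℝ (Fin d) => ⟪u, w⟫ / ‖u‖ ^ 2) v :=
    hinner.continuousAt.div ((continuous_norm.pow 2).continuousAt)
      (pow_ne_zero 2 (norm_ne_zero_iff.mpr hv))
  exact continuousAt_const.sub (h1.smul continuousAt_id)

lemma contAt_term {d : ℕ} (w v : EuclideanSpace ℝ (Fin d)) (hvw : ⟪v, w⟫ ≠ 0) :
    ContinuousAt (fun u : EuclideanSpace ℝ (Fin d) =>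
      if 0 ≤ ⟪u, w⟫ then w - (⟪u, w⟫ / ‖u‖ ^ 2) • u else 0) v := by
  have hv : v ≠ 0 := by rintro rfl; simp at hvw
  have hinner : Continuous fun u : EuclideanSpace ℝ (Fin d) => ⟪u, w⟫ :=
    continuous_id.inner continuous_const
  rcases hvw.lt_or_gt with h | h
  · have hev : ∀ᶠ u in 𝓝 v, ⟪u, w⟫ < 0 := hinner.continuousAt (Iio_mem_nhds h)
    have heq : (fun _ : EuclideanSpace ℝ (Fin d) => (0 : EuclideanSpace ℝ (Fin d))) =ᶠ[𝓝 v]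
        (fun u => if 0 ≤ ⟪u, w⟫ then w - (⟪u, w⟫ / ‖u‖ ^ 2) • u else 0) :=
      hev.mono fun u hu => (if_neg (not_le.mpr hu)).symm
    exact continuousAt_const.congr heq
  · have hev : ∀ᶠ u in 𝓝 v, 0 < ⟪u, w⟫ := hinner.continuousAt (Ioi_mem_nhds h)
    have heq : (fun u : EuclideanSpace ℝ (Fin d) => w - (⟪u, w⟫ / ‖u‖ ^ 2) • u) =ᶠ[𝓝 v]
        (fun u => if 0 ≤ ⟪u, w⟫ then w - (⟪u, w⟫ / ‖u‖ ^ 2) • u else 0) :=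
      hev.mono fun u hu => (if_pos hu.le).symm
    exact (contAt_smooth w v hv).congr heq

/-- Linear independence (almost everywhere) of the functionals
`φ_i(v) = (I - vvᵀ/‖v‖²) x_i · 1{⟨v, x_i⟩ ≥ 0}` associated to nonzero, pairwise
non-parallel data points: if a linear combination vanishes Lebesgue-almost everywhere,
all coefficients are zero. -/
theorem phi_linearly_independent {d n : ℕ} (hd : 2 ≤ d)
    (x : Fin n → EuclideanSpace ℝ (Fin d))
    (hx : ∀ i, x i ≠ 0)
    (hpar : ∀ i j, i ≠ j → ∀ β : ℝ, β ≠ 0 → x i ≠ β • x j)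
    (c : Fin n → ℝ)
    (hzero : ∀ᵐ v : EuclideanSpace ℝ (Fin d) ∂volume,
      ∑ i : Fin n, c i •
        (if 0 ≤ ⟪v, x i⟫ then x i - (⟪v, x i⟫ / ‖v‖ ^ 2) • v else 0) = 0) :
    ∀ i, c i = 0 := by
  intro i
  obtain ⟨v₀, hv0, hvi, hvj⟩ := exists_good_v hd x hx hpar i
  have hvi' : ⟪v₀, x i⟫ = 0 := by rw [real_inner_comm]; exact hvi
  set f : EuclideanSpace ℝ (Fin d) → EuclideanSpace ℝ (Fin d) := fun v =>
    ∑ j, c j • (if 0 ≤ ⟪v, x j⟫ then x j - (⟪v, x j⟫ / ‖v‖ ^ 2) • v else 0) with hf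
  -- f vanishes on the set where all inner products are nonzero
  have hfU : ∀ v, (∀ j, ⟪v, x j⟫ ≠ 0) → f v = 0 := by
    intro v hvU
    by_contra hne
    have hca : ContinuousAt f v :=
      tendsto_finset_sum _ fun j _ => ((contAt_term (x j) v (hvU j)).const_smul (c j))
    have hev : ∀ᶠ u in 𝓝 v, f u ≠ 0 := hca.eventually_ne hne
    obtain ⟨s, hs, hso, hvs⟩ := eventually_nhds_iff.mp hev
    have hs0 : volume s = 0 :=
      measure_mono_null (fun u hu => hs u hu) (ae_iff.mp hzero)
    exact (hso.measure_pos volume ⟨v, hvs⟩).ne' hs0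
  -- the path through v₀ in direction x i
  set γ : ℝ → EuclideanSpace ℝ (Fin d) := fun t => v₀ + t • x i with hγ
  have hγc : Continuous γ := continuous_const.add (continuous_id.smul continuous_const)
  have hγ0 : γ 0 = v₀ := by simp [hγ]
  have hipi : ∀ t, ⟪γ t, x i⟫ = t * ‖x i‖ ^ 2 := by
    intro t
    rw [hγ]
    simp only [inner_add_left, real_inner_smul_left, hvi', real_inner_self_eq_norm_sq, zero_add]
  have hxin : (0:ℝ) < ‖x i‖ ^ 2 := pow_pos (norm_pos_iff.mpr (hx i)) 2
  set S : ℝ → EuclideanSpace ℝ (Fin d) := fun t =>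
    ∑ j, c j • (if 0 < ⟪v₀, x j⟫ then x j - (⟪γ t, x j⟫ / ‖γ t‖ ^ 2) • γ t else 0) with hS
  set T : ℝ → EuclideanSpace ℝ (Fin d) := fun t =>
    c i • (x i - (⟪γ t, x i⟫ / ‖γ t‖ ^ 2) • γ t) with hT
  have hcomp : ∀ w : EuclideanSpace ℝ (Fin d),
      ContinuousAt (fun t => w - (⟪γ t, w⟫ / ‖γ t‖ ^ 2) • γ t) 0 := by
    intro w
    have h1 : ContinuousAt (fun u : EuclideanSpace ℝ (Fin d) => w - (⟪u, w⟫ / ‖u‖ ^ 2) • u)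
        (γ 0) := hγ0 ▸ contAt_smooth w v₀ hv0
    exact h1.comp hγc.continuousAt
  have hScont : ContinuousAt S 0 := by
    apply tendsto_finset_sum
    intro j _
    by_cases hj : 0 < ⟪v₀, x j⟫
    · simp only [if_pos hj]
      exact (hcomp (x j)).const_smul (c j)
    · simp only [if_neg hj]
      exact continuousAt_const
  have hTcont : ContinuousAt T 0 := (hcomp (x i)).const_smul (c i)
  -- eventual sign agreement
  have hsign : ∀ᶠ t in 𝓝 (0:ℝ), ∀ j : Fin n, j ≠ i →
      (0 < ⟪v₀, x j⟫ → 0 < ⟪γ t, x j⟫) ∧ (⟪v₀, x j⟫ < 0 → ⟪γ t, x j⟫ < 0) := by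
    rw [eventually_all]
    intro j
    by_cases hj : j = i
    · filter_upwards with t hji; exact absurd hj hji
    · have hc : ContinuousAt (fun t => ⟪γ t, x j⟫) 0 :=
        (hγc.inner continuous_const).continuousAt
      have hc0 : ⟪γ (0:ℝ), x j⟫ = ⟪v₀, x j⟫ := by rw [hγ0]
      have hvj' : ⟪v₀, x j⟫ ≠ 0 := by
        rw [real_inner_comm]; exact hvj j hj
      rcases hvj'.lt_or_gt with h | h
      · have hev : ∀ᶠ t in 𝓝 (0:ℝ), ⟪γ t, x j⟫ < 0 := hc (Iio_mem_nhds (by simpa only [hγ0] using h))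
        filter_upwards [hev] with t ht _
        exact ⟨fun hpos => absurd h (not_lt.mpr hpos.le), fun _ => ht⟩
      · have hev : ∀ᶠ t in 𝓝 (0:ℝ), 0 < ⟪γ t, x j⟫ := hc (Ioi_mem_nhds (by simpa only [hγ0] using h))
        filter_upwards [hev] with t ht _
        exact ⟨fun _ => ht, fun hneg => absurd h (not_lt.mpr hneg.le)⟩
  -- all inner products nonzero along the path, for t ≠ 0 with sign agreement
  have hallne : ∀ t : ℝ, t ≠ 0 →
      (∀ j : Fin n, j ≠ i →
        (0 < ⟪v₀, x j⟫ → 0 < ⟪γ t, x j⟫) ∧ (⟪v₀, x j⟫ < 0 → ⟪γ t, x j⟫ < 0)) →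
      ∀ j, ⟪γ t, x j⟫ ≠ 0 := by
    intro t ht hsgn j
    by_cases hj : j = i
    · rw [hj, hipi]
      exact mul_ne_zero ht hxin.ne'
    · have hvj' : ⟪v₀, x j⟫ ≠ 0 := by rw [real_inner_comm]; exact hvj j hj
      rcases hvj'.lt_or_gt with h | h
      · exact ((hsgn j hj).2 h).ne
      · exact ((hsgn j hj).1 h).ne'
  -- on the negative side
  have hP1 : ∀ᶠ t in 𝓝[<] (0:ℝ), S t = 0 := by
    filter_upwards [eventually_mem_nhdsWithin, (hsign.filter_mono nhdsWithin_le_nhds)]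
      with t ht hsgn
    have htne : t ≠ 0 := ne_of_lt ht
    have hfz : f (γ t) = 0 := hfU (γ t) (hallne t htne hsgn)
    have key : f (γ t) = S t := by
      show (∑ j, c j • (if 0 ≤ ⟪γ t, x j⟫ then x j - (⟪γ t, x j⟫ / ‖γ t‖ ^ 2) • γ t else 0)) =
        ∑ j, c j • (if 0 < ⟪v₀, x j⟫ then x j - (⟪γ t, x j⟫ / ‖γ t‖ ^ 2) • γ t else 0)
      apply Finset.sum_congr rfl
      intro j _
      by_cases hj : j = i
      · rw [hj, hipi]
        rw [if_neg (not_le.mpr (mul_neg_of_neg_of_pos (Set.mem_Iio.mp ht) hxin)),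
          if_neg (by rw [hvi']; exact lt_irrefl 0)]
      · have hvj' : ⟪v₀, x j⟫ ≠ 0 := by rw [real_inner_comm]; exact hvj j hj
        rcases hvj'.lt_or_gt with h | h
        · rw [if_neg (not_le.mpr ((hsgn j hj).2 h)), if_neg (not_lt.mpr h.le)]
        · rw [if_pos ((hsgn j hj).1 h).le, if_pos h]
    rw [← key]; exact hfz
  -- on the positive side
  have hP2 : ∀ᶠ t in 𝓝[>] (0:ℝ), S t + T t = 0 := by
    filter_upwards [eventually_mem_nhdsWithin, (hsign.filter_mono nhdsWithin_le_nhds)]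
      with t ht hsgn
    have htne : t ≠ 0 := ne_of_gt ht
    have hfz : f (γ t) = 0 := hfU (γ t) (hallne t htne hsgn)
    have hsplit : ∀ j : Fin n,
        c j • (if 0 ≤ ⟪γ t, x j⟫ then x j - (⟪γ t, x j⟫ / ‖γ t‖ ^ 2) • γ t else 0) =
        c j • (if 0 < ⟪v₀, x j⟫ then x j - (⟪γ t, x j⟫ / ‖γ t‖ ^ 2) • γ t else 0) +
          (if j = i then T t else 0) := by
      intro j
      by_cases hj : j = i
      · subst hj
        rw [if_pos rfl, if_pos (by rw [hipi]; exact (mul_pos (Set.mem_Ioi.mp ht) hxin).le),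
          if_neg (by rw [hvi']; exact lt_irrefl 0), smul_zero, zero_add, hT]
      · rw [if_neg hj, add_zero]
        have hvj' : ⟪v₀, x j⟫ ≠ 0 := by rw [real_inner_comm]; exact hvj j hj
        rcases hvj'.lt_or_gt with h | h
        · rw [if_neg (not_le.mpr ((hsgn j hj).2 h)), if_neg (not_lt.mpr h.le)]
        · rw [if_pos ((hsgn j hj).1 h).le, if_pos h]
    have key : f (γ t) = S t + T t := by
      show (∑ j, c j • (if 0 ≤ ⟪γ t, x j⟫ then x j - (⟪γ t, x j⟫ / ‖γ t‖ ^ 2) • γ t else 0)) =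
        S t + T t
      calc ∑ j, c j • (if 0 ≤ ⟪γ t, x j⟫ then x j - (⟪γ t, x j⟫ / ‖γ t‖ ^ 2) • γ t else 0)
          = ∑ j, (c j • (if 0 < ⟪v₀, x j⟫ then x j - (⟪γ t, x j⟫ / ‖γ t‖ ^ 2) • γ t else 0) +
              (if j = i then T t else 0)) := Finset.sum_congr rfl fun j _ => hsplit j
        _ = (∑ j, c j • (if 0 < ⟪v₀, x j⟫ then x j - (⟪γ t, x j⟫ / ‖γ t‖ ^ 2) • γ t else 0)) +
              ∑ j, (if j = i then T t else 0) := Finset.sum_add_distrib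
        _ = S t + T t := by
              rw [Finset.sum_ite_eq' Finset.univ i fun _ => T t, if_pos (Finset.mem_univ i)]
    rw [← key]; exact hfz
  -- take limits
  have hS0 : S 0 = 0 := by
    have h1 : Tendsto S (𝓝[<] (0:ℝ)) (𝓝 (S 0)) := hScont.tendsto.mono_left nhdsWithin_le_nhds
    have h2 : Tendsto S (𝓝[<] (0:ℝ)) (𝓝 0) :=
      Tendsto.congr' (hP1.mono fun t ht => ht.symm) tendsto_const_nhds
    exact tendsto_nhds_unique h1 h2
  have hST : S 0 + T 0 = 0 := by
    have h1 : Tendsto (fun t => S t + T t) (𝓝[>] (0:ℝ)) (𝓝 (S 0 + T 0)) :=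
      (hScont.add hTcont).tendsto.mono_left nhdsWithin_le_nhds
    have h2 : Tendsto (fun t => S t + T t) (𝓝[>] (0:ℝ)) (𝓝 0) :=
      Tendsto.congr' (hP2.mono fun t ht => ht.symm) tendsto_const_nhds
    exact tendsto_nhds_unique h1 h2
  have hT0 : T 0 = c i • x i := by
    show c i • (x i - (⟪γ 0, x i⟫ / ‖γ 0‖ ^ 2) • γ 0) = c i • x i
    rw [hipi]
    simp
  rw [hS0, zero_add, hT0] at hST
  rcases smul_eq_zero.mp hST with h | h
  · exact h
  · exact absurd h (hx i)
end

section
/- Let x₁, ..., x_n ∈ R^d with d ≥ 2, all nonzero, and pairwise non-parallel. Define θ_i : R^d \ {0} → R by θ_i(v) = σ(⟨v, x_i⟩/||v||₂) where σ is the ReLU. If ∑_{i=1}^n c_i θ_i(v) = 0 for all v ≠ 0, then c₁ = ... = c_n = 0. -/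
local notation "⟪" x ", " y "⟫" => @inner ℝ _ _ x y

lemma abs_add_abs_sub_of_abs_le {a s : ℝ} (h : |s| ≤ |a|) :
    |a + s| + |a - s| = 2 * |a| := by
  rcases le_total 0 a with ha | ha
  · rw [abs_of_nonneg ha] at h ⊢
    rw [abs_of_nonneg (by cases abs_le.1 h; linarith), abs_of_nonneg (by cases abs_le.1 h; linarith)]
    ring
  · rw [abs_of_nonpos ha] at h ⊢
    rw [abs_of_nonpos (by cases abs_le.1 h; linarith), abs_of_nonpos (by cases abs_le.1 h; linarith)]
    ring

lemma exists_good_perp {d n : ℕ} (hd : 2 ≤ d) (x : Fin n → EuclideanSpace ℝ (Fin d))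
    (hx : ∀ i, x i ≠ 0)
    (hpar : ∀ i j, i ≠ j → ∀ β : ℝ, β ≠ 0 → x i ≠ β • x j) (i : Fin n) :
    ∃ v : EuclideanSpace ℝ (Fin d), v ≠ 0 ∧ ⟪v, x i⟫ = 0 ∧ ∀ j, j ≠ i → ⟪v, x j⟫ ≠ 0 := by
  set H : Submodule ℝ (EuclideanSpace ℝ (Fin d)) := (ℝ ∙ x i)ᗮ with hH
  have hrank : Module.finrank ℝ H + 1 = d := by
    have h1 : Module.finrank ℝ (ℝ ∙ x i) = 1 := finrank_span_singleton (hx i)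
    have h2 := Submodule.finrank_add_finrank_orthogonal
      (K := ((ℝ ∙ x i) : Submodule ℝ (EuclideanSpace ℝ (Fin d))))
    rw [h1, finrank_euclideanSpace_fin, ← hH] at h2
    omega
  have hnt : Nontrivial H := by
    apply Submodule.nontrivial_iff_ne_bot.2
    intro hbot
    rw [hbot] at hrank
    simp at hrank
    omega
  -- family of proper subspaces of H
  set q : Fin n → Submodule ℝ H := fun j =>
    if j = i then ⊥ else Submodule.comap H.subtype (LinearMap.ker (innerSL ℝ (x j)).toLinearMap)
    with hq
  have hqi : q i = ⊥ := by simp [hq]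
  have hqj : ∀ j, j ≠ i →
      q j = Submodule.comap H.subtype (LinearMap.ker (innerSL ℝ (x j)).toLinearMap) := by
    intro j hj; simp [hq, hj]
  have hne : ∀ j, q j ≠ ⊤ := by
    intro j
    rcases eq_or_ne j i with rfl | hj
    · intro hbt
      have hbt' : (⊥ : Submodule ℝ H) = ⊤ := hqi ▸ hbt
      obtain ⟨u, hu⟩ := exists_ne (0 : H)
      apply hu
      have : u ∈ (⊥ : Submodule ℝ H) := hbt' ▸ Submodule.mem_top
      simpa using this
    · rw [hqj j hj]
      intro htop
      have hle : H ≤ (ℝ ∙ x j)ᗮ := by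
        intro w hw
        have : (⟨w, hw⟩ : H) ∈ (⊤ : Submodule ℝ H) := Submodule.mem_top
        rw [← htop] at this
        simp only [Submodule.mem_comap, LinearMap.mem_ker] at this
        rw [Submodule.mem_orthogonal_singleton_iff_inner_right]
        simpa using this
      have hle2 : (ℝ ∙ x j)ᗮᗮ ≤ Hᗮ := Submodule.orthogonal_le hle
      rw [Submodule.orthogonal_orthogonal, hH, Submodule.orthogonal_orthogonal] at hle2
      have hmem : x j ∈ ℝ ∙ x i := hle2 (Submodule.mem_span_singleton_self (x j))
      obtain ⟨β, hβ⟩ := Submodule.mem_span_singleton.1 hmem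
      have hβ0 : β ≠ 0 := by
        rintro rfl
        exact hx j (by simpa using hβ.symm)
      exact hpar j i hj β hβ0 hβ.symm
  have hcov : (⋃ j, (q j : Set H)) ≠ Set.univ := by
    intro hcov
    obtain ⟨j, hj⟩ := Subspace.exists_eq_top_of_iUnion_eq_univ hcov
    exact hne j hj
  obtain ⟨w, hw⟩ := Set.ne_univ_iff_exists_notMem _ |>.1 hcov
  simp only [Set.mem_iUnion, not_exists, SetLike.mem_coe] at hw
  refine ⟨(w : EuclideanSpace ℝ (Fin d)), ?_, ?_, ?_⟩
  · intro h0
    have := hw i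
    rw [hqi] at this
    exact this (by simpa using Subtype.ext h0)
  · rw [real_inner_comm]
    exact Submodule.mem_orthogonal_singleton_iff_inner_right.1 w.2
  · intro j hj hinner
    apply hw j
    rw [hqj j hj]
    simp only [Submodule.mem_comap, LinearMap.mem_ker]
    have h2 : ⟪x j, (w : EuclideanSpace ℝ (Fin d))⟫ = 0 := by
      rw [real_inner_comm]; exact hinner
    simpa using h2

/-- Linear independence of the functionals `θ_i(v) = σ(⟨v, x_i⟩/‖v‖)` (with `σ` the ReLU)
for nonzero, pairwise non-parallel data points: if a linear combination vanishes for all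
`v ≠ 0`, all coefficients are zero. -/
theorem theta_linearly_independent {d n : ℕ} (hd : 2 ≤ d)
    (x : Fin n → EuclideanSpace ℝ (Fin d))
    (hx : ∀ i, x i ≠ 0)
    (hpar : ∀ i j, i ≠ j → ∀ β : ℝ, β ≠ 0 → x i ≠ β • x j)
    (c : Fin n → ℝ)
    (hzero : ∀ v : EuclideanSpace ℝ (Fin d), v ≠ 0 →
      ∑ i : Fin n, c i * max (⟪v, x i⟫ / ‖v‖) 0 = 0) :
    ∀ i, c i = 0 := by
  -- Step 1: absolute values
  have habs : ∀ v : EuclideanSpace ℝ (Fin d), ∑ j, c j * |⟪v, x j⟫| = 0 := by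
    intro v
    rcases eq_or_ne v 0 with rfl | hv
    · simp
    · have hn : (0:ℝ) < ‖v‖ := norm_pos_iff.2 hv
      have h1 := hzero v hv
      have h2 := hzero (-v) (neg_ne_zero.2 hv)
      simp only [inner_neg_left, norm_neg] at h2
      have hsum : ∑ j, c j * (max (⟪v, x j⟫ / ‖v‖) 0 + max (-⟪v, x j⟫ / ‖v‖) 0) = 0 := by
        simp only [mul_add, Finset.sum_add_distrib, h1, h2, add_zero]
      have key : ∀ a : ℝ, max (a / ‖v‖) 0 + max (-a / ‖v‖) 0 = |a| / ‖v‖ := by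
        intro a
        rcases le_total 0 a with ha | ha
        · rw [abs_of_nonneg ha, max_eq_left (by positivity),
            max_eq_right (div_nonpos_of_nonpos_of_nonneg (by linarith) hn.le), add_zero]
        · rw [abs_of_nonpos ha, max_eq_right (div_nonpos_of_nonpos_of_nonneg ha hn.le),
            max_eq_left (div_nonneg (by linarith) hn.le), zero_add, neg_div]
      simp only [key] at hsum
      have : (∑ j, c j * |⟪v, x j⟫|) / ‖v‖ = 0 := by
        rw [Finset.sum_div]
        convert hsum using 2 with j
        ring
      exact (div_eq_zero_iff.1 this).resolve_right hn.ne'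
  intro i
  obtain ⟨v₀, hv0, hvi, hvj⟩ := exists_good_perp hd x hx hpar i
  set a : Fin n → ℝ := fun j => ⟪v₀, x j⟫ with ha
  set b : Fin n → ℝ := fun j => ⟪x i, x j⟫ with hb
  have hbi : 0 < b i := by
    have h0 : (0:ℝ) < ‖x i‖ := norm_pos_iff.2 (hx i)
    show (0:ℝ) < ⟪x i, x i⟫
    rw [real_inner_self_eq_norm_sq]
    positivity
  have key : ∀ t : ℝ, ∑ j, c j * |a j + t * b j| = 0 := by
    intro t
    have := habs (v₀ + t • x i)
    simpa only [inner_add_left, real_inner_smul_left] using this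
  -- choose small positive t
  have hev : ∀ j : Fin n, ∀ᶠ t : ℝ in nhdsWithin 0 (Set.Ioi 0), j ≠ i → |t * b j| ≤ |a j| := by
    intro j
    rcases eq_or_ne j i with rfl | hj
    · filter_upwards with t h; exact absurd rfl h
    · have hap : (0:ℝ) < |a j| := abs_pos.2 (hvj j hj)
      have hcont : Filter.Tendsto (fun t : ℝ => |t * b j|) (nhds 0) (nhds |0 * b j|) :=
        ((continuous_id.mul continuous_const).abs).tendsto 0
      rw [zero_mul, abs_zero] at hcont
      have hm : Filter.Tendsto (fun t : ℝ => |t * b j|)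
          (nhdsWithin 0 (Set.Ioi 0)) (nhds 0) := hcont.mono_left nhdsWithin_le_nhds
      filter_upwards [hm.eventually_lt_const hap] with t ht _
      exact ht.le
  obtain ⟨t, ht1, ht2⟩ :=
    ((Filter.eventually_all.2 hev).and (eventually_mem_nhdsWithin)).exists
  have htpos : (0:ℝ) < t := ht2
  have hai : a i = 0 := hvi
  have hterm : ∀ j, c j * (|a j + t * b j| + |a j + (-t) * b j|) =
      2 * (c j * |a j|) + (if j = i then c i * (2 * (t * b i)) else 0) := by
    intro j
    rcases eq_or_ne j i with rfl | hj
    · rw [if_pos rfl, hai]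
      rw [zero_add, zero_add, neg_mul, abs_neg, abs_of_pos (by positivity), abs_zero]
      ring
    · rw [if_neg hj, neg_mul, ← sub_eq_add_neg,
        abs_add_abs_sub_of_abs_le (ht1 j hj), add_zero]
      ring
  have hS : ∑ j, c j * (|a j + t * b j| + |a j + (-t) * b j|) = 0 := by
    simp only [mul_add, Finset.sum_add_distrib, key t, key (-t), add_zero]
  rw [Finset.sum_congr rfl (fun j _ => hterm j), Finset.sum_add_distrib,
    Finset.sum_ite_eq' Finset.univ i, if_pos (Finset.mem_univ i),
    ← Finset.mul_sum, habs v₀] at hS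
  have : c i * (2 * (t * b i)) = 0 := by linarith
  have h2 : (0:ℝ) < 2 * (t * b i) := by positivity
  exact (mul_eq_zero.1 this).resolve_right h2.ne'
end

section
/- Let Λ be a symmetric positive semidefinite n×n matrix with λ_min(Λ) ≥ ω/2 for some ω > 0, let e ∈ R^n, η > 0 with η ≤ 1/(3||Λ||₂), and let r ∈ R^n satisfy ||r||₂ ≤ c·ω·||e||₂ for a sufficiently small absolute constant c > 0 (c ≤ 1/32 suffices). If e' = e − ηΛe + ηr, then ||e'||₂² ≤ (1 − ηω/2)||e||₂². -/
local notation "⟪" x ", " y "⟫" => @inner ℝ _ _ x y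

set_option maxHeartbeats 1000000 in
/-- One-step contraction for weight-normalized gradient descent: if `Λ` is symmetric
PSD with `λ_min(Λ) ≥ ω/2`, the step size satisfies `η‖Λ‖ ≤ 1/3`, and the residual
satisfies `‖r‖ ≤ (1/32) ω ‖e‖`, then the updated error `e' = e - ηΛe + ηr` satisfies
`‖e'‖² ≤ (1 - ηω/2)‖e‖²`. -/
theorem one_step_contraction {n : ℕ} (ω η : ℝ) (hω : 0 < ω) (hη : 0 < η)
    (Λ : EuclideanSpace ℝ (Fin n) →L[ℝ] EuclideanSpace ℝ (Fin n))
    (hsymm : ∀ x z, ⟪Λ x, z⟫ = ⟪x, Λ z⟫)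
    (hmin : ∀ x, (ω / 2) * ‖x‖ ^ 2 ≤ ⟪x, Λ x⟫)
    (hstep : ∀ x, ‖Λ x‖ ≤ (3 * η)⁻¹ * ‖x‖)
    (e r : EuclideanSpace ℝ (Fin n))
    (hres : ‖r‖ ≤ (1 / 32) * ω * ‖e‖) :
    ‖e - η • Λ e + η • r‖ ^ 2 ≤ (1 - η * ω / 2) * ‖e‖ ^ 2 := by
  by_cases he : e = 0
  · have hr : r = 0 := by
      have : ‖r‖ ≤ 0 := by simpa [he] using hres
      exact norm_le_zero_iff.mp this
    simp [he, hr]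
  have hK : 0 < ‖e‖ := norm_pos_iff.mpr he
  set M : ℝ := (3 * η)⁻¹ with hMdef
  have hM0 : 0 < M := by positivity
  have hM1 : η * M = 1 / 3 := by
    rw [hMdef]
    field_simp
  set u := Λ e with hu
  set p : ℝ := ⟪e, Λ e⟫ with hpdef
  have hp : (ω / 2) * ‖e‖ ^ 2 ≤ p := hmin e
  have hp0 : 0 ≤ p := le_trans (by positivity) hp
  have hstepe : ‖u‖ ≤ M * ‖e‖ := hstep e
  -- η ω ≤ 2/3
  have hcse : p ≤ ‖e‖ * ‖u‖ := real_inner_le_norm e u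
  have hηω : η * ω ≤ 2 / 3 := by
    have h1 : (ω / 2) * ‖e‖ ^ 2 ≤ M * ‖e‖ ^ 2 := by nlinarith
    have h2 : ω / 2 ≤ M := by nlinarith [mul_pos hK hK]
    nlinarith
  -- key: ‖u‖² ≤ M * p
  have hcs : ‖u‖ ^ 2 ≤ M * p := by
    by_cases hu0 : u = 0
    · simp [hu0]
      positivity
    have hun : 0 < ‖u‖ := norm_pos_iff.mpr hu0
    set c : ℝ := ⟪u, Λ u⟫ with hcdef
    have hc : (ω / 2) * ‖u‖ ^ 2 ≤ c := hmin u
    have hc0 : 0 < c := lt_of_lt_of_le (by positivity) hc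
    set t : ℝ := ‖u‖ ^ 2 / c with htdef
    have hq : 0 ≤ ⟪e - t • u, Λ (e - t • u)⟫ :=
      le_trans (by positivity) (hmin _)
    have h1 : ⟪e, Λ u⟫ = ‖u‖ ^ 2 := by
      rw [← hsymm]
      exact real_inner_self_eq_norm_sq u
    have h2 : ⟪u, Λ e⟫ = ‖u‖ ^ 2 := by
      rw [← hu]
      exact real_inner_self_eq_norm_sq u
    have hexp : ⟪e - t • u, Λ (e - t • u)⟫ = p - 2 * t * ‖u‖ ^ 2 + t ^ 2 * c := by
      rw [map_sub, map_smul, inner_sub_left, inner_sub_right, inner_sub_right,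
        real_inner_smul_left, real_inner_smul_left, real_inner_smul_right,
        real_inner_smul_right, h1, h2, ← hpdef, ← hcdef]
      ring
    rw [hexp] at hq
    have ht : t * c = ‖u‖ ^ 2 := div_mul_cancel₀ _ (ne_of_gt hc0)
    have ht0 : 0 ≤ t := by positivity
    have h5 : t * ‖u‖ ^ 2 ≤ p := by nlinarith
    have key : ‖u‖ ^ 2 * ‖u‖ ^ 2 ≤ p * c := by nlinarith
    have hΛu : c ≤ ‖u‖ * ‖Λ u‖ := real_inner_le_norm u (Λ u)
    have hΛu2 : ‖Λ u‖ ≤ M * ‖u‖ := hstep u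
    have hc2 : c ≤ M * ‖u‖ ^ 2 := by nlinarith [hΛu, hΛu2, hun.le]
    have h6 : ‖u‖ ^ 2 * ‖u‖ ^ 2 ≤ (M * p) * ‖u‖ ^ 2 := by
      nlinarith [mul_le_mul_of_nonneg_left hc2 hp0, key]
    exact le_of_mul_le_mul_right h6 (by positivity)
  -- expansion of the goal
  have hcross : ⟪e - η • u, r⟫ ≤ (4 / 3) * ‖e‖ * ‖r‖ := by
    have h1 : ⟪e - η • u, r⟫ ≤ ‖e - η • u‖ * ‖r‖ := real_inner_le_norm _ _
    have h2 : ‖e - η • u‖ ≤ ‖e‖ + η * ‖u‖ := by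
      calc ‖e - η • u‖ ≤ ‖e‖ + ‖η • u‖ := norm_sub_le _ _
        _ = ‖e‖ + η * ‖u‖ := by rw [norm_smul, Real.norm_of_nonneg hη.le]
    have h3 : ‖e‖ + η * ‖u‖ ≤ (4 / 3) * ‖e‖ := by nlinarith
    nlinarith [norm_nonneg r]
  have hexp2 : ‖e - η • u + η • r‖ ^ 2
      = ‖e‖ ^ 2 - 2 * η * p + η ^ 2 * ‖u‖ ^ 2 + 2 * η * ⟪e - η • u, r⟫
        + η ^ 2 * ‖r‖ ^ 2 := by
    rw [norm_add_sq_real, norm_sub_sq_real, real_inner_smul_right, norm_smul,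
      norm_smul, real_inner_smul_right, Real.norm_of_nonneg hη.le, ← hpdef]
    ring
  rw [hexp2]
  have hr0 : 0 ≤ ‖r‖ := norm_nonneg r
  have hMp : η ^ 2 * (M * p) = η / 3 * p := by linear_combination η * p * hM1
  have hA : η ^ 2 * ‖u‖ ^ 2 ≤ η / 3 * p := by
    calc η ^ 2 * ‖u‖ ^ 2 ≤ η ^ 2 * (M * p) := by nlinarith [hcs, sq_nonneg η]
      _ = η / 3 * p := hMp
  have hB := mul_le_mul_of_nonneg_left hp hη.le
  have hC := mul_le_mul_of_nonneg_left hcross (by positivity : (0:ℝ) ≤ 2 * η)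
  have hres2 : ‖r‖ ^ 2 ≤ (1 / 32 * ω) ^ 2 * ‖e‖ ^ 2 := by
    nlinarith [mul_le_mul hres hres hr0 (by positivity : (0:ℝ) ≤ 1 / 32 * ω * ‖e‖)]
  have hE : (η * ω) ^ 2 ≤ 2 / 3 * (η * ω) := by nlinarith [hηω, mul_pos hη hω]
  have hcrossK : 2 * η * (4 / 3 * ‖e‖ * ‖r‖) ≤ η * ω / 12 * ‖e‖ ^ 2 := by
    nlinarith [mul_le_mul_of_nonneg_left hres (by positivity : (0:ℝ) ≤ 2 * η * (4 / 3 * ‖e‖))]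
  have hD : η ^ 2 * ‖r‖ ^ 2 ≤ η * ω / 1536 * ‖e‖ ^ 2 := by
    nlinarith [mul_le_mul_of_nonneg_left hres2 (sq_nonneg η),
      mul_le_mul_of_nonneg_right hE (sq_nonneg ‖e‖)]
  nlinarith [hA, hB, hC, hcrossK, hD]
end
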